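/- All-minors Matrix Tree Theorem: For a connected graph G = (N, E) with positive edge weights, reduced weighted Laplacian L̄ (the Laplacian with n-th row and column deleted), and any indices i, j ∈ {1, …, n−1}, the matrix L̄^{ij} obtained from L̄ by deleting its i-th row and j-th column satisfies det(L̄^{ij}) = (−1)^{i+j} Σ_{F ∈ T(ij, n)} β(F), where T(ij, n) is the set of spanning forests of G consisting of exactly two vertex-disjoint trees, one containing both i and j and the other containing node n. -/

import Mathlib

open Matrix Finset

variable {n m : ℕ}

/-- Nodes `a` and `b` are joined by some edge in the edge set `S`. -/
def edgeAdj (src tgt : Fin m → Fin (n + 1)) (S : Finset (Fin m)) (a b : Fin (n + 1)) : Prop :=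
  ∃ e ∈ S, (src e = a ∧ tgt e = b) ∨ (src e = b ∧ tgt e = a)

/-- The spanning subgraph with edge set `S` is connected. -/
def ConnectedOn (src tgt : Fin m → Fin (n + 1)) (S : Finset (Fin m)) : Prop :=
  ∀ a b : Fin (n + 1), Relation.ReflTransGen (edgeAdj src tgt S) a b

/-- `F` is the edge set of a spanning tree of the graph on `n + 1` nodes
(a connected spanning subgraph with exactly `n` edges). -/
def IsSpanningTree (src tgt : Fin m → Fin (n + 1)) (F : Finset (Fin m)) : Prop :=
  F.card = n ∧ ConnectedOn src tgt F

/-- Connectivity within the vertex set `V`, using only edges of `S` traversed inside `V`. -/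
def ConnWithin (src tgt : Fin m → Fin (n + 1)) (S : Finset (Fin m))
    (V : Finset (Fin (n + 1))) : Prop :=
  ∀ a ∈ V, ∀ b ∈ V,
    Relation.ReflTransGen (fun x y => x ∈ V ∧ y ∈ V ∧ edgeAdj src tgt S x y) a b

/-- `F` is a spanning forest of exactly two vertex-disjoint trees, one containing all
nodes in `N1` and the other containing all nodes in `N2`. -/
def IsSpanningForest2 (src tgt : Fin m → Fin (n + 1)) (F : Finset (Fin m))
    (N1 N2 : Finset (Fin (n + 1))) : Prop :=
  ∃ V1 V2 : Finset (Fin (n + 1)),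
    Disjoint V1 V2 ∧ V1 ∪ V2 = Finset.univ ∧ V1.Nonempty ∧ V2.Nonempty ∧
      N1 ⊆ V1 ∧ N2 ⊆ V2 ∧ F.card + 1 = n ∧
      (∀ e ∈ F, (src e ∈ V1 ∧ tgt e ∈ V1) ∨ (src e ∈ V2 ∧ tgt e ∈ V2)) ∧
      ConnWithin src tgt F V1 ∧ ConnWithin src tgt F V2

/-- The (signed) incidence matrix `C`. -/
def incMat (src tgt : Fin m → Fin (n + 1)) : Matrix (Fin (n + 1)) (Fin m) ℝ :=
  Matrix.of fun i e => if src e = i then 1 else if tgt e = i then -1 else 0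

/-- The weighted Laplacian `L = C ⬝ diag B ⬝ Cᵀ`. -/
noncomputable def lap (src tgt : Fin m → Fin (n + 1)) (B : Fin m → ℝ) :
    Matrix (Fin (n + 1)) (Fin (n + 1)) ℝ :=
  incMat src tgt * Matrix.diagonal B * (incMat src tgt)ᵀ

/-- The reduced Laplacian: delete the row and column of the reference node `Fin.last n`. -/
noncomputable def rlap (src tgt : Fin m → Fin (n + 1)) (B : Fin m → ℝ) :
    Matrix (Fin n) (Fin n) ℝ :=
  (lap src tgt B).submatrix Fin.castSucc Fin.castSucc

/-- The inverse of the reduced Laplacian, padded with a zero row and column at the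
reference node. -/
noncomputable def Amat (src tgt : Fin m → Fin (n + 1)) (B : Fin m → ℝ) :
    Matrix (Fin (n + 1)) (Fin (n + 1)) ℝ :=
  Matrix.of fun i j =>
    if hi : i = Fin.last n then 0
    else if hj : j = Fin.last n then 0
    else (rlap src tgt B)⁻¹ (i.castPred hi) (j.castPred hj)

open Classical in
/-- `Σ_{F ∈ T_E} β(F)`: total weight of all spanning trees. -/
noncomputable def treeSum (src tgt : Fin m → Fin (n + 1)) (B : Fin m → ℝ) : ℝ :=
  ∑ F ∈ Finset.univ.filter (fun F => IsSpanningTree src tgt F), ∏ e ∈ F, B e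

open Classical in
/-- `Σ_{F ∈ T_{−l}} β(F)`: total weight of all spanning trees avoiding the edge `l`. -/
noncomputable def treeSumAvoiding (src tgt : Fin m → Fin (n + 1)) (B : Fin m → ℝ)
    (l : Fin m) : ℝ :=
  ∑ F ∈ Finset.univ.filter (fun F => IsSpanningTree src tgt F ∧ l ∉ F), ∏ e ∈ F, B e

open Classical in
/-- `Σ_{F ∈ T(N1, N2)} β(F)`: total weight of two-tree spanning forests separating
`N1` from `N2`. -/
noncomputable def forestSum (src tgt : Fin m → Fin (n + 1)) (B : Fin m → ℝ)
    (N1 N2 : Finset (Fin (n + 1))) : ℝ :=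
  ∑ F ∈ Finset.univ.filter (fun F => IsSpanningForest2 src tgt F N1 N2), ∏ e ∈ F, B e

/-- The power transfer distribution factor `D_{l, î ĵ}`. -/
noncomputable def ptdf (src tgt : Fin m → Fin (n + 1)) (B : Fin m → ℝ) (l : Fin m)
    (ihat jhat : Fin (n + 1)) : ℝ :=
  B l * (Amat src tgt B (src l) ihat + Amat src tgt B (tgt l) jhat
    - Amat src tgt B (src l) jhat - Amat src tgt B (tgt l) ihat)

/-- An edge is a bridge if its removal disconnects the graph. -/
def IsBridge (src tgt : Fin m → Fin (n + 1)) (l : Fin m) : Prop :=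
  ¬ ConnectedOn src tgt (Finset.univ.erase l)

/-- There is a simple cycle (distinct edges, distinct vertices) containing both edges
`l` and `lhat`. -/
def ExistsSimpleCycleThrough (src tgt : Fin m → Fin (n + 1)) (l lhat : Fin m) : Prop :=
  ∃ (k : ℕ) (es : Fin (k + 2) → Fin m) (vs : Fin (k + 2) → Fin (n + 1)),
    Function.Injective es ∧ Function.Injective vs ∧
      (∀ t, (src (es t) = vs t ∧ tgt (es t) = vs (t + 1)) ∨
        (src (es t) = vs (t + 1) ∧ tgt (es t) = vs t)) ∧
      (∃ t, es t = l) ∧ (∃ t, es t = lhat)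

/-- The incidence submatrix `C_{−F}` on the surviving edges. -/
def Cminus (src tgt : Fin m → Fin (n + 1)) (F : Finset (Fin m)) :
    Matrix (Fin (n + 1)) {e : Fin m // e ∉ F} ℝ :=
  (incMat src tgt).submatrix id (fun e => e.val)

/-- The incidence submatrix `C_F` on the removed edges. -/
def Cof (src tgt : Fin m → Fin (n + 1)) (F : Finset (Fin m)) :
    Matrix (Fin (n + 1)) {e : Fin m // e ∈ F} ℝ :=
  (incMat src tgt).submatrix id (fun e => e.val)

/-- The diagonal susceptance submatrix `B_{−F}` on the surviving edges. -/
noncomputable def Bminus (B : Fin m → ℝ) (F : Finset (Fin m)) :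
    Matrix {e : Fin m // e ∉ F} {e : Fin m // e ∉ F} ℝ :=
  Matrix.diagonal fun e => B e.val

/-- The diagonal susceptance submatrix `B_F` on the removed edges. -/
noncomputable def Bof (B : Fin m → ℝ) (F : Finset (Fin m)) :
    Matrix {e : Fin m // e ∈ F} {e : Fin m // e ∈ F} ℝ :=
  Matrix.diagonal fun e => B e.val

/-- The post-contingency Laplacian `L_{−F} = C_{−F} ⬝ B_{−F} ⬝ C_{−F}ᵀ`. -/
noncomputable def lapMinus (src tgt : Fin m → Fin (n + 1)) (B : Fin m → ℝ)
    (F : Finset (Fin m)) : Matrix (Fin (n + 1)) (Fin (n + 1)) ℝ :=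
  Cminus src tgt F * Bminus B F * (Cminus src tgt F)ᵀ

/-- The padded inverse `A_{−F}` of the post-contingency reduced Laplacian. -/
noncomputable def AmatMinus (src tgt : Fin m → Fin (n + 1)) (B : Fin m → ℝ)
    (F : Finset (Fin m)) : Matrix (Fin (n + 1)) (Fin (n + 1)) ℝ :=
  Matrix.of fun i j =>
    if hi : i = Fin.last n then 0
    else if hj : j = Fin.last n then 0
    else ((lapMinus src tgt B F).submatrix Fin.castSucc Fin.castSucc)⁻¹
      (i.castPred hi) (j.castPred hj)

/-- The pre-contingency branch flow vector `f = diag(B) ⬝ Cᵀ ⬝ A ⬝ p`. -/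
noncomputable def flowPre (src tgt : Fin m → Fin (n + 1)) (B : Fin m → ℝ)
    (p : Fin (n + 1) → ℝ) : Fin m → ℝ :=
  (Matrix.diagonal B * (incMat src tgt)ᵀ * Amat src tgt B) *ᵥ p

/-- The post-contingency branch flow vector `f̃_{−F} = B_{−F} ⬝ C_{−F}ᵀ ⬝ A_{−F} ⬝ p`
on the surviving edges. -/
noncomputable def flowPost (src tgt : Fin m → Fin (n + 1)) (B : Fin m → ℝ)
    (F : Finset (Fin m)) (p : Fin (n + 1) → ℝ) : {e : Fin m // e ∉ F} → ℝ :=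
  (Bminus B F * (Cminus src tgt F)ᵀ * AmatMinus src tgt B F) *ᵥ p

/-- The generalized line outage distribution factor matrix
`K^F = B_{−F} ⬝ C_{−F}ᵀ ⬝ A_{−F} ⬝ C_F`. -/
noncomputable def glodf (src tgt : Fin m → Fin (n + 1)) (B : Fin m → ℝ)
    (F : Finset (Fin m)) : Matrix {e : Fin m // e ∉ F} {e : Fin m // e ∈ F} ℝ :=
  Bminus B F * (Cminus src tgt F)ᵀ * AmatMinus src tgt B F * Cof src tgt F

/-- The PTDF submatrix `D_{FF} = B_F ⬝ C_Fᵀ ⬝ A ⬝ C_F`. -/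
noncomputable def Dff (src tgt : Fin m → Fin (n + 1)) (B : Fin m → ℝ)
    (F : Finset (Fin m)) : Matrix {e : Fin m // e ∈ F} {e : Fin m // e ∈ F} ℝ :=
  Bof B F * (Cof src tgt F)ᵀ * Amat src tgt B * Cof src tgt F

/-- The PTDF submatrix `D_{−FF} = B_{−F} ⬝ C_{−F}ᵀ ⬝ A ⬝ C_F`. -/
noncomputable def DmFF (src tgt : Fin m → Fin (n + 1)) (B : Fin m → ℝ)
    (F : Finset (Fin m)) : Matrix {e : Fin m // e ∉ F} {e : Fin m // e ∈ F} ℝ :=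
  Bminus B F * (Cminus src tgt F)ᵀ * Amat src tgt B * Cof src tgt F

namespace AMTaux

section CB






variable {R : Type*} [CommRing R]

private abbrev ε' {k : ℕ} (σ : Equiv.Perm (Fin k)) : R := (Equiv.Perm.sign σ : ℤ)

theorem cb_aux_zero {k m : ℕ} (X : Matrix (Fin k) (Fin m) R) (Y : Matrix (Fin m) (Fin k) R)
    {p : Fin k → Fin m} (H : ¬Function.Injective p) :
    (∑ σ : Equiv.Perm (Fin k), (ε' σ : R) * ∏ x, X (σ x) (p x) * Y (p x) x) = 0 := by
  obtain ⟨i, j, hpij, hij⟩ : ∃ i j, p i = p j ∧ i ≠ j := by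
    rw [Function.Injective] at H
    push_neg at H
    obtain ⟨i, j, h1, h2⟩ := H
    exact ⟨i, j, h1, h2⟩
  exact Finset.sum_involution (fun σ _ => σ * Equiv.swap i j)
      (fun σ _ => by
        have : (∏ x, X (σ x) (p x)) = ∏ x, X ((σ * Equiv.swap i j) x) (p x) :=
          Fintype.prod_equiv (Equiv.swap i j) _ _ (by simp [Equiv.apply_swap_eq_self hpij])
        simp [ε', this, Equiv.Perm.sign_swap hij, -Equiv.Perm.sign_swap', Finset.prod_mul_distrib])
      (fun σ _ _ => (not_congr Equiv.mul_swap_eq_iff).mpr hij)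
      (fun _ _ => Finset.mem_univ _) fun σ _ => Equiv.mul_swap_involutive i j σ

theorem cb_expand {k m : ℕ} (X : Matrix (Fin k) (Fin m) R) (Y : Matrix (Fin m) (Fin k) R) :
    det (X * Y) = ∑ p ∈ (Finset.univ : Finset (Fin k → Fin m)).filter Function.Injective,
      ∑ σ : Equiv.Perm (Fin k), (ε' σ : R) * ∏ i, X (σ i) (p i) * Y (p i) i := by
  calc
    det (X * Y) = ∑ p : Fin k → Fin m, ∑ σ : Equiv.Perm (Fin k),
        (ε' σ : R) * ∏ i, X (σ i) (p i) * Y (p i) i := by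
      simp only [det_apply', Matrix.mul_apply, Finset.prod_univ_sum, Finset.mul_sum,
        Fintype.piFinset_univ, ε']
      rw [Finset.sum_comm]
    _ = _ := by
      refine (Finset.sum_subset (Finset.filter_subset _ _) fun f _ hinj ↦ ?_).symm
      exact cb_aux_zero X Y (by simpa using hinj)





theorem cb_perm_sum {k : ℕ} {R : Type*} [CommRing R] (M N : Matrix (Fin k) (Fin k) R) :
    det (M * N) = ∑ τ : Equiv.Perm (Fin k), ∑ σ : Equiv.Perm (Fin k),
      (ε' σ : R) * ∏ i, M (σ i) (τ i) * N (τ i) i := by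
  rw [cb_expand]
  exact Finset.sum_bij
    (fun p h => Equiv.ofBijective p
      ((Finite.injective_iff_bijective).mp (Finset.mem_filter.1 h).2))
    (fun _ _ => Finset.mem_univ _)
    (fun _ _ _ _ h => by injection h)
    (fun b _ => ⟨b, Finset.mem_filter.2 ⟨Finset.mem_univ _, b.injective⟩,
      Equiv.coe_fn_injective rfl⟩)
    (fun _ _ => rfl)

theorem cb_inner {k m : ℕ} {R : Type*} [CommRing R] (F : (Fin k → Fin m) → R)
    (S : Finset (Fin m)) (h : S.card = k)
    [DecidablePred (Function.Injective : (Fin k → Fin m) → Prop)]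
    [DecidableEq (Finset (Fin m))] :
    ∑ p ∈ ((Finset.univ : Finset (Fin k → Fin m)).filter Function.Injective).filter
        (fun p => Finset.image p Finset.univ = S), F p
      = ∑ τ : Equiv.Perm (Fin k), F (S.orderEmbOfFin h ∘ τ) := by
  refine (Finset.sum_bij (fun (τ : Equiv.Perm (Fin k)) _ => S.orderEmbOfFin h ∘ τ)
    ?_ ?_ ?_ ?_).symm
  · intro τ _
    have hinj : Function.Injective (S.orderEmbOfFin h ∘ τ) :=
      ((S.orderEmbOfFin h).injective).comp τ.injective
    refine Finset.mem_filter.2 ⟨Finset.mem_filter.2 ⟨Finset.mem_univ _, hinj⟩, ?_⟩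
    apply Finset.eq_of_subset_of_card_le
    · intro x hx
      obtain ⟨a, _, rfl⟩ := Finset.mem_image.1 hx
      exact S.orderEmbOfFin_mem h _
    · rw [h, Finset.card_image_of_injective _ hinj, Finset.card_univ, Fintype.card_fin]
  · intro τ₁ _ τ₂ _ heq
    exact Equiv.ext fun a => (S.orderEmbOfFin h).injective (congrFun heq a)
  · intro p hp
    obtain ⟨hp1, hp2⟩ := Finset.mem_filter.1 hp
    have hinj := (Finset.mem_filter.1 hp1).2
    have hmem : ∀ a, p a ∈ S := by
      intro a
      rw [← hp2]
      exact Finset.mem_image.2 ⟨a, Finset.mem_univ a, rfl⟩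
    have hginj : Function.Injective
        (fun a => (S.orderIsoOfFin h).symm ⟨p a, hmem a⟩) := by
      intro a b hab
      have := congrArg (fun x => ((S.orderIsoOfFin h) x : Fin m)) hab
      simp only [OrderIso.apply_symm_apply] at this
      exact hinj this
    refine ⟨Equiv.ofBijective _ (Finite.injective_iff_bijective.mp hginj),
      Finset.mem_univ _, ?_⟩
    funext a
    show S.orderEmbOfFin h ((S.orderIsoOfFin h).symm ⟨p a, hmem a⟩) = p a
    rw [← Finset.coe_orderIsoOfFin_apply, OrderIso.apply_symm_apply]
  · intro τ _; rfl

theorem cb_group {k m : ℕ} {R : Type*} [CommRing R] (F : (Fin k → Fin m) → R) :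
    ∑ p ∈ (Finset.univ : Finset (Fin k → Fin m)).filter Function.Injective, F p
      = ∑ S : Finset (Fin m), if h : S.card = k then
          ∑ τ : Equiv.Perm (Fin k), F (S.orderEmbOfFin h ∘ τ) else 0 := by
  classical
  rw [← Finset.sum_fiberwise_of_maps_to
    (g := fun p : Fin k → Fin m => Finset.image p Finset.univ)
    (t := (Finset.univ : Finset (Finset (Fin m))))
    (fun p _ => Finset.mem_univ _) F]
  refine Finset.sum_congr rfl fun S _ => ?_
  by_cases h : S.card = k
  · rw [dif_pos h, cb_inner F S h]
  · rw [dif_neg h]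
    convert Finset.sum_empty
    rw [Finset.eq_empty_iff_forall_notMem]
    intro p hp
    obtain ⟨hp1, hp2⟩ := Finset.mem_filter.1 hp
    have hinj := (Finset.mem_filter.1 hp1).2
    apply h
    rw [← hp2, Finset.card_image_of_injective _ hinj, Finset.card_univ, Fintype.card_fin]





theorem cauchy_binet {k m : ℕ} {R : Type*} [CommRing R]
    (X : Matrix (Fin k) (Fin m) R) (Y : Matrix (Fin m) (Fin k) R) :
    Matrix.det (X * Y) = ∑ S : Finset (Fin m), if h : S.card = k then
      Matrix.det (X.submatrix id (S.orderEmbOfFin h))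
        * Matrix.det (Y.submatrix (S.orderEmbOfFin h) id) else 0 := by
  classical
  rw [cb_expand, cb_group]
  refine Finset.sum_congr rfl fun S _ => ?_
  by_cases h : S.card = k
  · rw [dif_pos h, dif_pos h, ← Matrix.det_mul,
      cb_perm_sum (X.submatrix id (S.orderEmbOfFin h)) (Y.submatrix (S.orderEmbOfFin h) id)]
    rfl
  · rw [dif_neg h, dif_neg h]



end CB

/-! ### reach machinery (already tested) -/

def reachIn {α : Type*} (R : α → α → Prop) : ℕ → α → α → Prop
  | 0, a, b => a = b
  | k+1, a, b => ∃ c, R a c ∧ reachIn R k c b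

theorem rtg_reachIn {α : Type*} {R : α → α → Prop} {a b : α}
    (h : Relation.ReflTransGen R a b) : ∃ k, reachIn R k a b := by
  induction h using Relation.ReflTransGen.head_induction_on with
  | refl => exact ⟨0, rfl⟩
  | head hac _ ih =>
    obtain ⟨k, hk⟩ := ih
    exact ⟨k + 1, _, hac, hk⟩

theorem reachIn_rtg {α : Type*} {R : α → α → Prop} {k : ℕ} {a b : α}
    (h : reachIn R k a b) : Relation.ReflTransGen R a b := by
  induction k generalizing a with
  | zero => rw [show a = b from h]
  | succ k ih =>
    obtain ⟨c, hac, hc⟩ := h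
    exact Relation.ReflTransGen.head hac (ih hc)

open Classical in
noncomputable def htF {α : Type*} (R : α → α → Prop) (r a : α) : ℕ :=
  if h : ∃ k, reachIn R k a r then Nat.find h else 0

theorem htF_le {α : Type*} {R : α → α → Prop} {r a : α} {k : ℕ}
    (h : reachIn R k a r) : htF R r a ≤ k := by
  classical
  rw [htF, dif_pos ⟨k, h⟩]
  exact Nat.find_le h

theorem htF_spec {α : Type*} {R : α → α → Prop} {r a : α}
    (h : ∃ k, reachIn R k a r) : reachIn R (htF R r a) a r := by
  classical
  rw [htF, dif_pos h]
  exact Nat.find_spec h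

theorem parent_exists {α : Type*} {R : α → α → Prop} {r a : α}
    (h : ∃ k, reachIn R k a r) (hne : a ≠ r) :
    ∃ c, R a c ∧ htF R r c < htF R r a := by
  have hs := htF_spec h
  rcases hht : htF R r a with _ | t
  · rw [hht] at hs; exact absurd hs hne
  · rw [hht] at hs
    obtain ⟨c, hac, hc⟩ := hs
    exact ⟨c, hac, lt_of_le_of_lt (htF_le hc) (by omega)⟩

theorem rtg_symm {α : Type*} {R : α → α → Prop} (hsymm : ∀ x y, R x y → R y x)
    {a b : α} (h : Relation.ReflTransGen R a b) : Relation.ReflTransGen R b a := by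
  induction h with
  | refl => exact Relation.ReflTransGen.refl
  | tail _ hbc ih => exact Relation.ReflTransGen.head (hsymm _ _ hbc) ih

/-! ### row maps and incidence entries -/

def rho (i : Fin (n+1)) : Fin n → Fin (n+2) := fun a => (i.succAbove a).castSucc

theorem rho_injective (i : Fin (n+1)) : Function.Injective (rho (n := n) i) :=
  fun a b h => Fin.succAbove_right_injective (Fin.castSucc_injective _ h)

theorem rho_ne_cs (i : Fin (n+1)) (a : Fin n) : rho i a ≠ i.castSucc :=
  fun h => Fin.succAbove_ne i a (Fin.castSucc_injective _ h)

theorem rho_ne_last (i : Fin (n+1)) (a : Fin n) : rho i a ≠ Fin.last (n+1) :=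
  (Fin.castSucc_lt_last _).ne

theorem rho_surj (i : Fin (n+1)) (v : Fin (n+2)) (h1 : v ≠ i.castSucc)
    (h2 : v ≠ Fin.last (n+1)) : ∃ a, rho i a = v := by
  obtain ⟨w, rfl⟩ := Fin.exists_castSucc_eq.mpr h2
  have hw : w ≠ i := fun h => h1 (by rw [h])
  obtain ⟨a, ha⟩ := Fin.exists_succAbove_eq hw
  exact ⟨a, by rw [rho, ha]⟩

variable (src tgt : Fin m → Fin (n + 2))

theorem inc_entry_cases (hsimple : ∀ e, src e ≠ tgt e) (e : Fin m) (v : Fin (n+2)) :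
    (src e = v ∧ incMat src tgt v e = 1) ∨
    (tgt e = v ∧ incMat src tgt v e = -1) ∨
    (src e ≠ v ∧ tgt e ≠ v ∧ incMat src tgt v e = 0) := by
  by_cases h1 : src e = v
  · exact Or.inl ⟨h1, by simp [incMat, h1]⟩
  · by_cases h2 : tgt e = v
    · exact Or.inr (Or.inl ⟨h2, by simp [incMat, h1, h2]⟩)
    · exact Or.inr (Or.inr ⟨h1, h2, by simp [incMat, h1, h2]⟩)

theorem sum_g_inc (hsimple : ∀ e, src e ≠ tgt e) (g : Fin (n+2) → ℝ) (e : Fin m) :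
    ∑ v : Fin (n+2), g v * incMat src tgt v e = g (src e) - g (tgt e) := by
  have hstep : ∀ v : Fin (n+2), g v * incMat src tgt v e
      = (if src e = v then g v else 0) - (if tgt e = v then g v else 0) := by
    intro v
    rcases inc_entry_cases src tgt hsimple e v with ⟨h1, h2⟩ | ⟨h1, h2⟩ | ⟨h1, h2, h3⟩
    · rw [h2, if_pos h1, if_neg (fun h : tgt e = v => hsimple e (h1.trans h.symm))]
      ring
    · rw [h2, if_pos h1, if_neg (fun h : src e = v => hsimple e (h.trans h1.symm))]
      ring
    · rw [h3, if_neg h1, if_neg h2]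
      ring
  rw [Finset.sum_congr rfl (fun v _ => hstep v), Finset.sum_sub_distrib,
    Finset.sum_ite_eq, Finset.sum_ite_eq]
  simp

theorem sum_rho_inc (hsimple : ∀ e, src e ≠ tgt e) (i : Fin (n+1)) (g : Fin (n+2) → ℝ)
    (hgi : g i.castSucc = 0) (hgl : g (Fin.last (n+1)) = 0) (e : Fin m) :
    ∑ a : Fin n, g (rho i a) * incMat src tgt (rho i a) e = g (src e) - g (tgt e) := by
  have h1 := Fin.sum_univ_castSucc (f := fun v : Fin (n+2) => g v * incMat src tgt v e)
  have h2 := Fin.sum_univ_succAbove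
    (f := fun w : Fin (n+1) => g w.castSucc * incMat src tgt w.castSucc e) i
  rw [sum_g_inc src tgt hsimple g e] at h1
  rw [h2, hgi, hgl, zero_mul, zero_mul, zero_add, add_zero] at h1
  exact h1.symm

theorem sum_cs_inc (hsimple : ∀ e, src e ≠ tgt e) (g : Fin (n+2) → ℝ)
    (hgl : g (Fin.last (n+1)) = 0) (e : Fin m) :
    ∑ w : Fin (n+1), g w.castSucc * incMat src tgt w.castSucc e
      = g (src e) - g (tgt e) := by
  have h1 := Fin.sum_univ_castSucc (f := fun v : Fin (n+2) => g v * incMat src tgt v e)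
  rw [sum_g_inc src tgt hsimple g e, hgl, zero_mul, add_zero] at h1
  exact h1.symm

/-! ### cofactor relation -/

theorem cofactor_rel {k : ℕ} (Mb : Matrix (Fin (k+1)) (Fin k) ℝ) (c : Fin k) :
    ∑ r : Fin (k+1), (-1:ℝ)^(r:ℕ) * (Mb.submatrix r.succAbove id).det * Mb r c = 0 := by
  classical
  set Q : Matrix (Fin (k+1)) (Fin (k+1)) ℝ :=
    Matrix.of fun p q => Fin.cases (Mb p c) (fun t => Mb p t) q with hQ
  have hQ0 : ∀ p, Q p 0 = Mb p c := fun p => rfl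
  have hQs : ∀ p t, Q p t.succ = Mb p t := fun p t => rfl
  have hdup : Q.det = 0 := by
    rw [← Matrix.det_transpose]
    refine Matrix.det_zero_of_row_eq (i := 0) (j := c.succ) (Fin.succ_ne_zero c).symm ?_
    funext p
    show Q p 0 = Q p c.succ
    rw [hQ0, hQs]
  have hexp := Matrix.det_succ_column_zero Q
  rw [hdup] at hexp
  have hsub : ∀ r : Fin (k+1), Q.submatrix r.succAbove Fin.succ = Mb.submatrix r.succAbove id := by
    intro r
    ext p t
    exact hQs _ _
  rw [Finset.sum_congr rfl (fun r _ => by rw [hsub r, hQ0])] at hexp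
  rw [← hexp.symm]
  exact Finset.sum_congr rfl (fun r _ => by ring)


theorem prod_pm_one {α : Type*} (s : Finset α) (f : α → ℝ)
    (h : ∀ a ∈ s, f a = 1 ∨ f a = -1) : s.prod f = 1 ∨ s.prod f = -1 := by
  classical
  induction s using Finset.induction_on with
  | empty => left; simp
  | @insert a s' hx ih =>
    rw [Finset.prod_insert hx]
    rcases h a (Finset.mem_insert_self a s') with h1 | h1 <;>
      rcases ih (fun b hb => h b (Finset.mem_insert_of_mem hb)) with h2 | h2 <;>
      simp [h1, h2]

theorem detU {k : ℕ} (M : Matrix (Fin k) (Fin k) ℝ) (f : Fin k → ℕ)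
    (hd : ∀ a, M a a = 1 ∨ M a a = -1)
    (ho : ∀ a b, a ≠ b → M a b ≠ 0 → f a < f b) :
    M.det = 1 ∨ M.det = -1 := by
  classical
  have hbt : M.BlockTriangular f := by
    intro a b hba
    by_contra hne
    rcases eq_or_ne a b with rfl | hab
    · exact absurd hba (lt_irrefl _)
    · exact absurd (ho a b hab hne) (by omega)
  rw [hbt.det]
  apply prod_pm_one
  intro c _
  have htri : (M.toSquareBlock f c).BlockTriangular id := by
    intro a b hba
    have hab : a ≠ b := fun h => by rw [h] at hba; exact lt_irrefl _ hba
    by_contra hne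
    have hne' : M a.val b.val ≠ 0 := hne
    have h1 : f a.val < f b.val := ho a.val b.val (fun h => hab (Subtype.ext h)) hne'
    have h2 : f a.val = c := a.2
    have h3 : f b.val = c := b.2
    omega
  rw [Matrix.det_of_upperTriangular htri]
  apply prod_pm_one
  intro a _
  exact hd a.val


/-! ### zero determinant from an edge-closed vertex set -/

variable (src tgt : Fin m → Fin (n + 2))

theorem det_zero_of_closed (hsimple : ∀ e, src e ≠ tgt e) (i : Fin (n+1))
    (S : Finset (Fin m)) (hcard : S.card = n) (W : Finset (Fin (n+2)))
    (hWi : i.castSucc ∉ W) (hWl : Fin.last (n+1) ∉ W) (hWne : W.Nonempty)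
    (hclosed : ∀ e ∈ S, (src e ∈ W ↔ tgt e ∈ W)) :
    ((incMat src tgt).submatrix (rho i) (S.orderEmbOfFin hcard)).det = 0 := by
  classical
  apply Matrix.exists_vecMul_eq_zero_iff.mp
  set g : Fin (n+2) → ℝ := fun v => if v ∈ W then 1 else 0 with hg
  refine ⟨fun a => g (rho i a), ?_, ?_⟩
  · obtain ⟨w, hw⟩ := hWne
    obtain ⟨a, ha⟩ := rho_surj i w (fun h => hWi (h ▸ hw)) (fun h => hWl (h ▸ hw))
    intro h0
    have h1 := congrFun h0 a
    rw [ha] at h1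
    simp only [g, if_pos hw, Pi.zero_apply] at h1
    exact one_ne_zero h1
  · funext c
    show ∑ a, g (rho i a) * (incMat src tgt) (rho i a) (S.orderEmbOfFin hcard c) = 0
    rw [sum_rho_inc src tgt hsimple i g (if_neg hWi) (if_neg hWl)]
    have hmem := S.orderEmbOfFin_mem hcard c
    have := hclosed _ hmem
    by_cases h1 : src (S.orderEmbOfFin hcard c) ∈ W
    · rw [hg]; simp only [if_pos h1, if_pos (this.mp h1)]; ring
    · rw [hg]; simp only [if_neg h1, if_neg (fun h => h1 (this.mpr h))]; ring

/-! ### values constant along connected pieces -/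

theorem eq_on_conn (S : Finset (Fin m)) (V : Finset (Fin (n+2)))
    (hconn : ConnWithin src tgt S V) (x : Fin (n+2) → ℝ)
    (hx : ∀ e ∈ S, x (src e) = x (tgt e)) {a b : Fin (n+2)}
    (ha : a ∈ V) (hb : b ∈ V) : x a = x b := by
  have h := hconn a ha b hb
  induction h with
  | refl => rfl
  | tail _ hstep ih =>
    obtain ⟨hbV, hcV, e, he, hor⟩ := hstep
    rcases hor with ⟨h1, h2⟩ | ⟨h1, h2⟩
    · rw [ih hbV, ← h1, ← h2]; exact hx e he
    · rw [ih hbV, ← h1, ← h2]; exact (hx e he).symm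

/-! ### other endpoint -/

def otherEnd (e : Fin m) (v : Fin (n+2)) : Fin (n+2) :=
  if src e = v then tgt e else src e

theorem otherEnd_of (hsimple : ∀ e, src e ≠ tgt e) {e : Fin m} {v w : Fin (n+2)}
    (hv : src e = v ∨ tgt e = v) (hw : src e = w ∨ tgt e = w) (hvw : v ≠ w) :
    otherEnd src tgt e v = w := by
  rcases hv with hv | hv
  · rw [otherEnd, if_pos hv]
    rcases hw with hw | hw
    · exact absurd (hv.symm.trans hw) hvw
    · exact hw
  · have hsv : src e ≠ v := fun h => hsimple e (h.trans hv.symm)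
    rw [otherEnd, if_neg hsv]
    rcases hw with hw | hw
    · exact hw
    · exact absurd (hv.symm.trans hw) hvw

/-! ### unimodularity: determinant of a spanning-2-forest incidence minor is ±1 -/

theorem key_pm (hsimple : ∀ e, src e ≠ tgt e) (S : Finset (Fin m)) (hcard : S.card = n)
    (i : Fin (n+1)) (V1 V2 : Finset (Fin (n+2))) (hdisj : Disjoint V1 V2)
    (hunion : V1 ∪ V2 = Finset.univ) (hi1 : i.castSucc ∈ V1)
    (hl2 : Fin.last (n+1) ∈ V2)
    (hc1 : ConnWithin src tgt S V1) (hc2 : ConnWithin src tgt S V2) :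
    ((incMat src tgt).submatrix (rho i) (S.orderEmbOfFin hcard)).det = 1 ∨
      ((incMat src tgt).submatrix (rho i) (S.orderEmbOfFin hcard)).det = -1 := by
  classical
  set R1 : Fin (n+2) → Fin (n+2) → Prop :=
    fun x y => x ∈ V1 ∧ y ∈ V1 ∧ edgeAdj src tgt S x y with hR1
  set R2 : Fin (n+2) → Fin (n+2) → Prop :=
    fun x y => x ∈ V2 ∧ y ∈ V2 ∧ edgeAdj src tgt S x y with hR2
  set ht : Fin (n+2) → ℕ := fun v =>
    if v ∈ V1 then htF R1 i.castSucc v else htF R2 (Fin.last (n+1)) v with hht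
  have hmemor : ∀ v : Fin (n+2), v ∈ V1 ∨ v ∈ V2 := fun v =>
    Finset.mem_union.mp (hunion ▸ Finset.mem_univ v)
  have hnotV1 : ∀ {v : Fin (n+2)}, v ∈ V2 → v ∉ V1 :=
    fun hv2 hv1 => Finset.disjoint_left.mp hdisj hv1 hv2
  have H : ∀ a : Fin n, ∃ e, e ∈ S ∧ (src e = rho i a ∨ tgt e = rho i a) ∧
      ht (otherEnd src tgt e (rho i a)) < ht (rho i a) := by
    intro a
    rcases hmemor (rho i a) with hv | hv
    · have hreach : ∃ k, reachIn R1 k (rho i a) i.castSucc :=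
        rtg_reachIn (hc1 (rho i a) hv _ hi1)
      obtain ⟨c, hRvc, hlt⟩ := parent_exists hreach (rho_ne_cs i a)
      obtain ⟨hv1, hc1m, e, he, hor⟩ := hRvc
      have hvc : rho i a ≠ c := by
        rintro rfl
        rcases hor with ⟨h1, h2⟩ | ⟨h1, h2⟩ <;> exact hsimple e (h1.trans h2.symm)
      have hv_end : src e = rho i a ∨ tgt e = rho i a :=
        hor.elim (fun h => Or.inl h.1) (fun h => Or.inr h.2)
      have hc_end : src e = c ∨ tgt e = c :=
        hor.elim (fun h => Or.inr h.2) (fun h => Or.inl h.1)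
      have hoe : otherEnd src tgt e (rho i a) = c :=
        otherEnd_of src tgt hsimple hv_end hc_end hvc
      refine ⟨e, he, hv_end, ?_⟩
      rw [hoe, hht]
      simp only [if_pos hc1m, if_pos hv]
      exact hlt
    · have hreach : ∃ k, reachIn R2 k (rho i a) (Fin.last (n+1)) :=
        rtg_reachIn (hc2 (rho i a) hv _ hl2)
      obtain ⟨c, hRvc, hlt⟩ := parent_exists hreach (rho_ne_last i a)
      obtain ⟨hv1, hc1m, e, he, hor⟩ := hRvc
      have hvc : rho i a ≠ c := by
        rintro rfl
        rcases hor with ⟨h1, h2⟩ | ⟨h1, h2⟩ <;> exact hsimple e (h1.trans h2.symm)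
      have hv_end : src e = rho i a ∨ tgt e = rho i a :=
        hor.elim (fun h => Or.inl h.1) (fun h => Or.inr h.2)
      have hc_end : src e = c ∨ tgt e = c :=
        hor.elim (fun h => Or.inr h.2) (fun h => Or.inl h.1)
      have hoe : otherEnd src tgt e (rho i a) = c :=
        otherEnd_of src tgt hsimple hv_end hc_end hvc
      refine ⟨e, he, hv_end, ?_⟩
      rw [hoe, hht]
      simp only [if_neg (hnotV1 hc1m), if_neg (hnotV1 hv)]
      exact hlt
  choose pe hpeS hpend hpelt using H
  have hpe_inj : Function.Injective pe := by
    intro a b hab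
    by_contra hne
    have hvv : rho i a ≠ rho i b := fun h => hne (rho_injective i h)
    have hb_end : src (pe a) = rho i b ∨ tgt (pe a) = rho i b := by
      rw [hab]; exact hpend b
    have ha_end : src (pe b) = rho i a ∨ tgt (pe b) = rho i a := by
      rw [← hab]; exact hpend a
    have h1 : otherEnd src tgt (pe a) (rho i a) = rho i b :=
      otherEnd_of src tgt hsimple (hpend a) hb_end hvv
    have h2 : otherEnd src tgt (pe b) (rho i b) = rho i a :=
      otherEnd_of src tgt hsimple (hpend b) ha_end hvv.symm
    have l1 := hpelt a
    rw [h1] at l1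
    have l2 := hpelt b
    rw [h2] at l2
    omega
  have hσinj : Function.Injective
      (fun a : Fin n => (S.orderIsoOfFin hcard).symm ⟨pe a, hpeS a⟩) := by
    intro a b hab
    apply hpe_inj
    have h2 := congrArg (fun x => ((S.orderIsoOfFin hcard) x : Fin m)) hab
    simpa using h2
  set σe : Equiv.Perm (Fin n) :=
    Equiv.ofBijective _ (Finite.injective_iff_bijective.mp hσinj) with hσe
  have hεσ : ∀ a, S.orderEmbOfFin hcard (σe a) = pe a := by
    intro a
    show S.orderEmbOfFin hcard ((S.orderIsoOfFin hcard).symm ⟨pe a, hpeS a⟩) = pe a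
    rw [← Finset.coe_orderIsoOfFin_apply, OrderIso.apply_symm_apply]
  set M := (incMat src tgt).submatrix (rho i) (S.orderEmbOfFin hcard) with hM
  set P := M.submatrix id σe with hPdef
  have hPentry : ∀ a b, P a b = incMat src tgt (rho i a) (pe b) := by
    intro a b
    show M a (σe b) = _
    rw [hM]
    show incMat src tgt (rho i a) (S.orderEmbOfFin hcard (σe b)) = _
    rw [hεσ]
  have hP : P.det = 1 ∨ P.det = -1 := by
    apply detU P (fun a => ht (rho i a))
    · intro a
      rw [hPentry]
      rcases hpend a with h | h
      · left; simp [incMat, h]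
      · right
        have hsv : src (pe a) ≠ rho i a := fun hh => hsimple _ (hh.trans h.symm)
        simp [incMat, hsv, h]
    · intro a b hab hne
      rw [hPentry] at hne
      have hend_a : src (pe b) = rho i a ∨ tgt (pe b) = rho i a := by
        rcases inc_entry_cases src tgt hsimple (pe b) (rho i a) with
          ⟨h1, _⟩ | ⟨h1, _⟩ | ⟨_, _, h3⟩
        exacts [Or.inl h1, Or.inr h1, absurd h3 hne]
      have hvv : rho i b ≠ rho i a := fun h => hab (rho_injective i h).symm
      have hoe : otherEnd src tgt (pe b) (rho i b) = rho i a :=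
        otherEnd_of src tgt hsimple (hpend b) hend_a hvv
      have h3 := hpelt b
      rw [hoe] at h3
      exact h3
  have hdet : P.det = (Equiv.Perm.sign σe : ℤ) * M.det := Matrix.det_permute' σe M
  rcases Int.units_eq_one_or (Equiv.Perm.sign σe) with hs | hs <;> rw [hs] at hdet
  · simp only [Units.val_one, Int.cast_one, one_mul] at hdet
    rw [← hdet]
    exact hP
  · simp only [Units.val_neg, Units.val_one, Int.cast_neg, Int.cast_one, neg_mul,
      one_mul] at hdet
    rcases hP with h | h
    · right; linarith
    · left; linarith


/-! ### connectivity within a component -/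

theorem connWithin_comp (S : Finset (Fin m)) (r : Fin (n+2)) (V : Finset (Fin (n+2)))
    (hV : ∀ w, w ∈ V ↔ Relation.ReflTransGen (edgeAdj src tgt S) r w) :
    ConnWithin src tgt S V := by
  have hres : ∀ a, Relation.ReflTransGen (edgeAdj src tgt S) r a →
      Relation.ReflTransGen (fun x y => x ∈ V ∧ y ∈ V ∧ edgeAdj src tgt S x y) r a := by
    intro a h
    induction h with
    | refl => exact .refl
    | tail h1 h2 ih =>
      rename_i b c
      have hbV : b ∈ V := (hV b).mpr h1
      have hcV : c ∈ V := (hV c).mpr (h1.tail h2)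
      exact ih.tail ⟨hbV, hcV, h2⟩
  intro a ha b hb
  have hsymr : ∀ x y : Fin (n+2),
      (fun x y => x ∈ V ∧ y ∈ V ∧ edgeAdj src tgt S x y) x y →
      (fun x y => x ∈ V ∧ y ∈ V ∧ edgeAdj src tgt S x y) y x := by
    rintro x y ⟨h1, h2, e, he, hor⟩
    exact ⟨h2, h1, e, he, hor.symm⟩
  exact (rtg_symm hsymr (hres a ((hV a).mp ha))).trans (hres b ((hV b).mp hb))

/-! ### the two key per-subset lemmas -/

theorem key_pos (hsimple : ∀ e, src e ≠ tgt e) (S : Finset (Fin m)) (hcard : S.card = n)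
    (i j : Fin (n+1))
    (hf : IsSpanningForest2 src tgt S {i.castSucc, j.castSucc} {Fin.last (n+1)}) :
    ((incMat src tgt).submatrix (rho i) (S.orderEmbOfFin hcard)).det *
      ((incMat src tgt).submatrix (rho j) (S.orderEmbOfFin hcard)).det
      = (-1:ℝ)^((i:ℕ)+(j:ℕ)) := by
  classical
  obtain ⟨V1, V2, hdisj, hunion, _, _, hN1, hN2, hcardF, hedges, hc1, hc2⟩ := hf
  have hi1 : i.castSucc ∈ V1 := hN1 (Finset.mem_insert_self _ _)
  have hj1 : j.castSucc ∈ V1 := hN1 (Finset.mem_insert_of_mem (Finset.mem_singleton_self _))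
  have hl2 : Fin.last (n+1) ∈ V2 := hN2 (Finset.mem_singleton_self _)
  set Mb : Matrix (Fin (n+1)) (Fin n) ℝ :=
    (incMat src tgt).submatrix Fin.castSucc (S.orderEmbOfFin hcard) with hMb
  set d : Fin (n+1) → ℝ :=
    fun r => ((incMat src tgt).submatrix (rho r) (S.orderEmbOfFin hcard)).det with hd
  set x : Fin (n+2) → ℝ := fun v =>
    if h : v = Fin.last (n+1) then 0
    else (-1:ℝ)^((v.castPred h : Fin (n+1)) : ℕ) * d (v.castPred h) with hx
  have hxcs : ∀ r : Fin (n+1), x r.castSucc = (-1:ℝ)^(r:ℕ) * d r := by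
    intro r
    have hne : r.castSucc ≠ Fin.last (n+1) := (Fin.castSucc_lt_last r).ne
    rw [hx]
    simp only [dif_neg hne, Fin.castPred_castSucc]
  have hedge : ∀ e ∈ S, x (src e) = x (tgt e) := by
    intro e he
    obtain ⟨c, hc⟩ : ∃ c, S.orderEmbOfFin hcard c = e := by
      have h1 : e ∈ Set.range (S.orderEmbOfFin hcard) := by
        rw [Finset.range_orderEmbOfFin]; exact he
      exact h1
    have hcof := cofactor_rel Mb c
    have hsum : ∑ w : Fin (n+1), x w.castSucc * incMat src tgt w.castSucc e = 0 := by
      refine Eq.trans (Finset.sum_congr rfl fun w _ => ?_) hcof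
      have hm : Mb w c = incMat src tgt w.castSucc e := by
        rw [hMb]; show incMat src tgt w.castSucc (S.orderEmbOfFin hcard c) = _; rw [hc]
      have hsub : Mb.submatrix w.succAbove id
          = (incMat src tgt).submatrix (rho w) (S.orderEmbOfFin hcard) := by
        ext a c'; rfl
      rw [hxcs, hsub, hm, hd]
    have h2 := sum_cs_inc src tgt hsimple x (by rw [hx]; simp) e
    rw [hsum] at h2
    linarith [h2]
  have heq : x i.castSucc = x j.castSucc :=
    eq_on_conn src tgt S V1 hc1 x hedge hi1 hj1
  rw [hxcs, hxcs] at heq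
  have hsq : d i * d i = 1 := by
    rcases key_pm src tgt hsimple S hcard i V1 V2 hdisj hunion hi1 hl2 hc1 hc2 with h1 | h1 <;>
      rw [show ((incMat src tgt).submatrix (rho i) (S.orderEmbOfFin hcard)).det = d i from rfl] at h1 <;>
      rw [h1] <;> norm_num
  have hb2 : (-1:ℝ)^(j:ℕ) * (-1:ℝ)^(j:ℕ) = 1 := by
    rw [← mul_pow]; norm_num
  show d i * d j = _
  calc d i * d j = ((-1:ℝ)^(j:ℕ) * (-1:ℝ)^(j:ℕ)) * (d i * d j) := by rw [hb2, one_mul]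
    _ = ((-1:ℝ)^(j:ℕ) * d j) * ((-1:ℝ)^(j:ℕ) * d i) := by ring
    _ = ((-1:ℝ)^(i:ℕ) * d i) * ((-1:ℝ)^(j:ℕ) * d i) := by rw [heq]
    _ = ((-1:ℝ)^(i:ℕ) * (-1:ℝ)^(j:ℕ)) * (d i * d i) := by ring
    _ = (-1:ℝ)^((i:ℕ)+(j:ℕ)) := by rw [hsq, mul_one, pow_add]

theorem key_neg (hsimple : ∀ e, src e ≠ tgt e) (S : Finset (Fin m)) (hcard : S.card = n)
    (i j : Fin (n+1))
    (hnf : ¬ IsSpanningForest2 src tgt S {i.castSucc, j.castSucc} {Fin.last (n+1)}) :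
    ((incMat src tgt).submatrix (rho i) (S.orderEmbOfFin hcard)).det *
      ((incMat src tgt).submatrix (rho j) (S.orderEmbOfFin hcard)).det = 0 := by
  classical
  set Radj : Fin (n+2) → Fin (n+2) → Prop := edgeAdj src tgt S with hRadj
  have hsym : ∀ x y : Fin (n+2), Radj x y → Radj y x := by
    rintro x y ⟨e, he, hor⟩
    exact ⟨e, he, hor.symm⟩
  set comp : Fin (n+2) → Finset (Fin (n+2)) := fun v =>
    Finset.univ.filter (fun w => Relation.ReflTransGen Radj v w) with hcomp
  have hmem_iff : ∀ v w, w ∈ comp v ↔ Relation.ReflTransGen Radj v w := by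
    intro v w
    rw [hcomp]
    simp
  have hmself : ∀ v, v ∈ comp v := fun v => (hmem_iff v v).mpr .refl
  have hsymc : ∀ {v w}, w ∈ comp v → v ∈ comp w := by
    intro v w h
    rw [hmem_iff] at *
    exact rtg_symm hsym h
  have htransc : ∀ {u v w}, v ∈ comp u → w ∈ comp v → w ∈ comp u := by
    intro u v w h1 h2
    rw [hmem_iff] at *
    exact h1.trans h2
  have hclosedc : ∀ v, ∀ e ∈ S, (src e ∈ comp v ↔ tgt e ∈ comp v) := by
    intro v e he
    constructor <;> intro h <;> rw [hmem_iff] at *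
    · exact h.tail ⟨e, he, Or.inl ⟨rfl, rfl⟩⟩
    · exact h.tail ⟨e, he, Or.inr ⟨rfl, rfl⟩⟩
  have hKne : comp (Fin.last (n+1)) ≠ Finset.univ := by
    intro hK
    have hreach : ∀ v : Fin (n+2), ∃ k, reachIn Radj k v (Fin.last (n+1)) := by
      intro v
      have h1 : v ∈ comp (Fin.last (n+1)) := hK ▸ Finset.mem_univ v
      exact rtg_reachIn (rtg_symm hsym ((hmem_iff _ _).mp h1))
    have H2 : ∀ v ∈ (Finset.univ : Finset (Fin (n+2))).erase (Fin.last (n+1)),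
        ∃ e, e ∈ S ∧ (src e = v ∨ tgt e = v) ∧
          htF Radj (Fin.last (n+1)) (otherEnd src tgt e v)
            < htF Radj (Fin.last (n+1)) v := by
      intro v hv
      obtain ⟨c, hRvc, hlt⟩ := parent_exists (hreach v) (Finset.ne_of_mem_erase hv)
      obtain ⟨e, he, hor⟩ := hRvc
      have hvc : v ≠ c := by
        rintro rfl
        rcases hor with ⟨h1, h2⟩ | ⟨h1, h2⟩ <;> exact hsimple e (h1.trans h2.symm)
      have hv_end : src e = v ∨ tgt e = v :=
        hor.elim (fun h => Or.inl h.1) (fun h => Or.inr h.2)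
      have hc_end : src e = c ∨ tgt e = c :=
        hor.elim (fun h => Or.inr h.2) (fun h => Or.inl h.1)
      refine ⟨e, he, hv_end, ?_⟩
      rw [otherEnd_of src tgt hsimple hv_end hc_end hvc]
      exact hlt
    set Er := (Finset.univ : Finset (Fin (n+2))).erase (Fin.last (n+1)) with hEr
    set φ : {v : Fin (n+2) // v ∈ Er} → Fin m := fun w => (H2 w.1 w.2).choose with hφ
    have hφspec : ∀ w : {v : Fin (n+2) // v ∈ Er}, φ w ∈ S ∧
        (src (φ w) = w.1 ∨ tgt (φ w) = w.1) ∧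
        htF Radj (Fin.last (n+1)) (otherEnd src tgt (φ w) w.1)
          < htF Radj (Fin.last (n+1)) w.1 := fun w => (H2 w.1 w.2).choose_spec
    have hclt : S.card < (Finset.univ : Finset {v : Fin (n+2) // v ∈ Er}).card := by
      rw [Finset.card_univ, Fintype.card_coe, hEr,
        Finset.card_erase_of_mem (Finset.mem_univ _), Finset.card_univ, Fintype.card_fin,
        hcard]
      omega
    obtain ⟨u, -, v, -, huv, hφeq⟩ :=
      Finset.exists_ne_map_eq_of_card_lt_of_maps_to hclt (fun w _ => (hφspec w).1)
    have huv1 : u.1 ≠ v.1 := fun h => huv (Subtype.ext h)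
    have h1 : otherEnd src tgt (φ u) u.1 = v.1 :=
      otherEnd_of src tgt hsimple (hφspec u).2.1
        (by rw [hφeq]; exact (hφspec v).2.1) huv1
    have h2 : otherEnd src tgt (φ v) v.1 = u.1 :=
      otherEnd_of src tgt hsimple (hφspec v).2.1
        (by rw [← hφeq]; exact (hφspec u).2.1) huv1.symm
    have l1 := (hφspec u).2.2
    rw [h1] at l1
    have l2 := (hφspec v).2.2
    rw [h2] at l2
    omega
  by_cases hiK : i.castSucc ∈ comp (Fin.last (n+1))
  · apply mul_eq_zero_of_left
    apply det_zero_of_closed src tgt hsimple i S hcard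
      (Finset.univ \ comp (Fin.last (n+1)))
    · simp [hiK]
    · simp [hmself (Fin.last (n+1))]
    · rw [Finset.sdiff_nonempty]
      intro hsub
      exact hKne (Finset.eq_univ_of_forall (fun v => hsub (Finset.mem_univ v)))
    · intro e he
      have h1 := hclosedc (Fin.last (n+1)) e he
      simp [Finset.mem_sdiff, h1]
  · by_cases hjK : j.castSucc ∈ comp (Fin.last (n+1))
    · apply mul_eq_zero_of_right
      apply det_zero_of_closed src tgt hsimple j S hcard
        (Finset.univ \ comp (Fin.last (n+1)))
      · simp [hjK]
      · simp [hmself (Fin.last (n+1))]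
      · rw [Finset.sdiff_nonempty]
        intro hsub
        exact hKne (Finset.eq_univ_of_forall (fun v => hsub (Finset.mem_univ v)))
      · intro e he
        have h1 := hclosedc (Fin.last (n+1)) e he
        simp [Finset.mem_sdiff, h1]
    · have hlastU : Fin.last (n+1) ∉ comp i.castSucc := fun h => hiK (hsymc h)
      by_cases hjU : j.castSucc ∈ comp i.castSucc
      · by_cases hall : ∀ v : Fin (n+2), v ∈ comp (Fin.last (n+1)) ∨ v ∈ comp i.castSucc
        · exfalso
          apply hnf
          have hKU : ∀ {w}, w ∈ comp (Fin.last (n+1)) → w ∉ comp i.castSucc :=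
            fun hwK hwU => hiK (htransc hwK (hsymc hwU))
          have hV2eq : Finset.univ \ comp i.castSucc = comp (Fin.last (n+1)) := by
            apply Finset.Subset.antisymm
            · intro w hw
              obtain ⟨-, hwU⟩ := Finset.mem_sdiff.1 hw
              rcases hall w with h | h
              · exact h
              · exact absurd h hwU
            · intro w hw
              exact Finset.mem_sdiff.2 ⟨Finset.mem_univ _, hKU hw⟩
          refine ⟨comp i.castSucc, Finset.univ \ comp i.castSucc, Finset.disjoint_sdiff,
            Finset.union_sdiff_of_subset (Finset.subset_univ _),
            ⟨_, hmself i.castSucc⟩,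
            ⟨_, Finset.mem_sdiff.2 ⟨Finset.mem_univ _, hlastU⟩⟩, ?_, ?_, ?_, ?_, ?_, ?_⟩
          · refine Finset.insert_subset (hmself i.castSucc) ?_
            exact Finset.singleton_subset_iff.2 hjU
          · exact Finset.singleton_subset_iff.2
              (Finset.mem_sdiff.2 ⟨Finset.mem_univ _, hlastU⟩)
          · rw [hcard]
          · intro e he
            by_cases hs : src e ∈ comp i.castSucc
            · exact Or.inl ⟨hs, (hclosedc i.castSucc e he).mp hs⟩
            · have hts : tgt e ∉ comp i.castSucc :=
                fun h => hs ((hclosedc i.castSucc e he).mpr h)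
              exact Or.inr ⟨Finset.mem_sdiff.2 ⟨Finset.mem_univ _, hs⟩,
                Finset.mem_sdiff.2 ⟨Finset.mem_univ _, hts⟩⟩
          · exact connWithin_comp src tgt S i.castSucc _ (fun w => hmem_iff i.castSucc w)
          · rw [hV2eq]
            exact connWithin_comp src tgt S (Fin.last (n+1)) _
              (fun w => hmem_iff (Fin.last (n+1)) w)
        · push_neg at hall
          obtain ⟨v, hvK, hvU⟩ := hall
          apply mul_eq_zero_of_left
          apply det_zero_of_closed src tgt hsimple i S hcard (comp v)
          · exact fun h => hvU (hsymc h)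
          · exact fun h => hvK (hsymc h)
          · exact ⟨v, hmself v⟩
          · exact hclosedc v
      · apply mul_eq_zero_of_right
        apply det_zero_of_closed src tgt hsimple j S hcard (comp i.castSucc) hjU hlastU
          ⟨_, hmself i.castSucc⟩ (hclosedc i.castSucc)


end AMTaux

/-- **All-minors Matrix Tree Theorem.**
Deleting row `i` and column `j` from the reduced Laplacian of a connected graph (on
`n + 2` nodes, reference node `Fin.last (n+1)`) gives a matrix whose determinant is
`(−1)^{i+j}` times the total weight of two-tree spanning forests separating `{i, j}`
from the reference node. -/
theorem all_minors_matrix_tree_theorem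
    (src tgt : Fin m → Fin (n + 2)) (B : Fin m → ℝ)
    (hB : ∀ e, 0 < B e)
    (hsimple : ∀ e, src e ≠ tgt e)
    (hconn : ConnectedOn src tgt Finset.univ)
    (i j : Fin (n + 1)) :
    ((rlap src tgt B).submatrix i.succAbove j.succAbove).det
      = (-1 : ℝ) ^ ((i : ℕ) + (j : ℕ)) *
        forestSum src tgt B {i.castSucc, j.castSucc} {Fin.last (n + 1)} := by
  classical
  have hfact : (rlap src tgt B).submatrix i.succAbove j.succAbove
      = (Matrix.of fun (a : Fin n) (e : Fin m) => incMat src tgt (AMTaux.rho i a) e * B e)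
        * (Matrix.of fun (e : Fin m) (b : Fin n) => incMat src tgt (AMTaux.rho j b) e) := by
    ext a b
    simp only [Matrix.submatrix_apply, rlap, lap, Matrix.mul_apply, Matrix.mul_diagonal,
      Matrix.transpose_apply, Matrix.of_apply, AMTaux.rho, Matrix.diagonal_apply,
      mul_ite, mul_zero, Finset.sum_ite_eq', Finset.mem_univ, if_true]
  rw [hfact, AMTaux.cauchy_binet]
  have hsummand : ∀ S : Finset (Fin m),
      (if h : S.card = n then
        ((Matrix.of fun (a : Fin n) (e : Fin m) => incMat src tgt (AMTaux.rho i a) e * B e).submatrix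
            id (S.orderEmbOfFin h)).det
        * ((Matrix.of fun (e : Fin m) (b : Fin n) => incMat src tgt (AMTaux.rho j b) e).submatrix
            (S.orderEmbOfFin h) id).det
       else 0)
      = if IsSpanningForest2 src tgt S {i.castSucc, j.castSucc} {Fin.last (n+1)}
          then (-1:ℝ)^((i:ℕ)+(j:ℕ)) * ∏ e ∈ S, B e else 0 := by
    intro S
    by_cases h : S.card = n
    · rw [dif_pos h]
      have hX : (Matrix.of fun (a : Fin n) (e : Fin m) =>
            incMat src tgt (AMTaux.rho i a) e * B e).submatrix id (S.orderEmbOfFin h)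
          = ((incMat src tgt).submatrix (AMTaux.rho i) (S.orderEmbOfFin h))
              * Matrix.diagonal (fun b => B (S.orderEmbOfFin h b)) := by
        ext a b
        simp [Matrix.mul_diagonal]
      have hY : (Matrix.of fun (e : Fin m) (b : Fin n) =>
            incMat src tgt (AMTaux.rho j b) e).submatrix (S.orderEmbOfFin h) id
          = ((incMat src tgt).submatrix (AMTaux.rho j) (S.orderEmbOfFin h))ᵀ := by
        ext a b
        rfl
      rw [hX, hY, Matrix.det_mul, Matrix.det_diagonal, Matrix.det_transpose]
      have hprod : ∏ b : Fin n, B (S.orderEmbOfFin h b) = ∏ e ∈ S, B e := by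
        refine Finset.prod_bij (fun b _ => S.orderEmbOfFin h b)
          (fun b _ => S.orderEmbOfFin_mem h b)
          (fun a _ a' _ hh => (S.orderEmbOfFin h).injective hh) ?_ (fun _ _ => rfl)
        intro e he
        have h1 : e ∈ Set.range (S.orderEmbOfFin h) := by
          rw [Finset.range_orderEmbOfFin]; exact he
        obtain ⟨b, hb⟩ := h1
        exact ⟨b, Finset.mem_univ _, hb⟩
      rw [hprod]
      by_cases hf : IsSpanningForest2 src tgt S {i.castSucc, j.castSucc} {Fin.last (n+1)}
      · rw [if_pos hf]
        have hk := AMTaux.key_pos src tgt hsimple S h i j hf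
        linear_combination (∏ e ∈ S, B e) * hk
      · rw [if_neg hf]
        have hk := AMTaux.key_neg src tgt hsimple S h i j hf
        linear_combination (∏ e ∈ S, B e) * hk
    · rw [dif_neg h, if_neg]
      intro hf
      obtain ⟨V1, V2, h1, h2, h3, h4, h5, h6, hcardF, h7⟩ := hf
      exact h (by omega)
  rw [Finset.sum_congr rfl (fun S _ => hsummand S)]
  show _ = (-1:ℝ)^((i:ℕ)+(j:ℕ)) * ∑ F ∈ Finset.univ.filter
      (fun F => IsSpanningForest2 src tgt F {i.castSucc, j.castSucc} {Fin.last (n+1)}),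
      ∏ e ∈ F, B e
  rw [Finset.sum_filter, Finset.mul_sum]
  refine Finset.sum_congr rfl fun S _ => ?_
  rw [mul_ite, mul_zero]
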